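/- If Λ = Uᵀ Λ' U where U is a nonnegative square matrix and Λ, Λ' are nonnegative upper-triangular matrices with strictly positive diagonal entries, then U is a monomial matrix: each row and each column of U has exactly one nonzero entry, and that entry is positive. -/
import Mathlib


open Matrix

theorem stmt4 {T : Type*} [Fintype T] [DecidableEq T] [LinearOrder T]
    (U Λ Λ' : Matrix T T ℝ)
    (hU : ∀ i j, 0 ≤ U i j)
    (hΛnn : ∀ i j, 0 ≤ Λ i j) (hΛut : ∀ i j, j < i → Λ i j = 0)
    (hΛd : ∀ i, 0 < Λ i i)
    (hΛ'nn : ∀ i j, 0 ≤ Λ' i j) (hΛ'ut : ∀ i j, j < i → Λ' i j = 0)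
    (hΛ'd : ∀ i, 0 < Λ' i i)
    (heq : Λ = Uᵀ * Λ' * U) :
    (∀ t, ∃! a, U t a ≠ 0) ∧ (∀ a, ∃! t, U t a ≠ 0) ∧
      (∀ t a, U t a ≠ 0 → 0 < U t a) := by
  have hsum : ∀ i j, Λ i j = ∑ l, (∑ m, U m i * Λ' m l) * U l j := by
    intro i j
    rw [heq]
    simp only [Matrix.mul_apply, Matrix.transpose_apply]
  have key : ∀ i j, j < i → ∀ k, U k i = 0 ∨ U k j = 0 := by
    intro i j hlt k
    have h0 : ∑ l, (∑ m, U m i * Λ' m l) * U l j = 0 := by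
      rw [← hsum, hΛut i j hlt]
    have hnn : ∀ l ∈ Finset.univ, 0 ≤ (∑ m, U m i * Λ' m l) * U l j := by
      intro l _
      exact mul_nonneg (Finset.sum_nonneg fun m _ => mul_nonneg (hU m i) (hΛ'nn m l)) (hU l j)
    have hterm := (Finset.sum_eq_zero_iff_of_nonneg hnn).mp h0 k (Finset.mem_univ k)
    rcases mul_eq_zero.mp hterm with h | h
    · left
      have hnn2 : ∀ m ∈ Finset.univ, 0 ≤ U m i * Λ' m k :=
        fun m _ => mul_nonneg (hU m i) (hΛ'nn m k)
      have h2 := (Finset.sum_eq_zero_iff_of_nonneg hnn2).mp h k (Finset.mem_univ k)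
      rcases mul_eq_zero.mp h2 with h' | h'
      · exact h'
      · exact absurd h' (ne_of_gt (hΛ'd k))
    · right; exact h
  have hA : ∀ k i j, U k i ≠ 0 → U k j ≠ 0 → i = j := by
    intro k i j hi hj
    by_contra hne
    rcases lt_or_gt_of_ne hne with h | h
    · rcases key j i h k with h' | h'
      · exact hj h'
      · exact hi h'
    · rcases key i j h k with h' | h'
      · exact hi h'
      · exact hj h'
  have hB : ∀ i, ∃ k, U k i ≠ 0 := by
    intro i
    by_contra hc
    push_neg at hc
    have hz : Λ i i = 0 := by
      rw [hsum]
      apply Finset.sum_eq_zero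
      intro l _
      rw [hc l, mul_zero]
    exact absurd hz (ne_of_gt (hΛd i))
  choose f hf using hB
  have finj : Function.Injective f := by
    intro i j h
    have hj' : U (f i) j ≠ 0 := by rw [h]; exact hf j
    exact hA (f i) i j (hf i) hj'
  have fsurj : Function.Surjective f := Finite.surjective_of_injective finj
  refine ⟨?_, ?_, fun t a h => lt_of_le_of_ne (hU t a) (Ne.symm h)⟩
  · intro t
    obtain ⟨a, rfl⟩ := fsurj t
    exact ⟨a, hf a, fun b hb => hA (f a) b a hb (hf a)⟩
  · intro a
    refine ⟨f a, hf a, ?_⟩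
    intro t ht
    obtain ⟨b, rfl⟩ := fsurj t
    have hab : a = b := hA (f b) a b ht (hf b)
    rw [hab]
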